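/- arXiv:1901.04389 — 2 statements merged into one kernel-verified Lean document; each statement's English description precedes it below -/
import Mathlib

section
/- Let m ≥ 3 and N ≥ 2 be integers, let x₀, x₁, x₂ ∈ ℂ with |x_j| ≥ √2 for j = 0,1,2, and let a_i, b_i, c_i ∈ ℂ^m (i = 1,…,N−2) be arbitrary vectors. In ℂ^m ⊗ ℂ^{3N} (standard basis e₀,…,e_{3N−1} of ℂ^{3N}), define v₁ = e₁⊗e₂ + e₂⊗e₁ + x₀·e₀⊗e₃ + ∑_{i=1}^{N−2} a_i⊗e_{3i+3}, v₂ = e₂⊗e₀ + e₀⊗e₂ + x₁·e₁⊗e₄ + ∑_{i=1}^{N−2} b_i⊗e_{3i+4}, and v₃ = e₀⊗e₁ + e₁⊗e₀ + x₂·e₂⊗e₅ + ∑_{i=1}^{N−2} c_i⊗e_{3i+5}. Then span{v₁, v₂, v₃} is a 3-dimensional entanglement-breaking subspace of ℂ^m ⊗ ℂ^{3N}. -/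
open scoped BigOperators ComplexOrder
open Kronecker

noncomputable section

/-- The `j`-th standard basis vector of `ℂ^q` (zero if `j ≥ q`). -/
def ee (q : ℕ) (j : ℕ) : Fin q → ℂ := fun b => if (b : ℕ) = j then 1 else 0

/-- Tensor (Kronecker) product of two vectors. -/
def tens {A B : Type*} (x : A → ℂ) (y : B → ℂ) : A × B → ℂ := fun p => x p.1 * y p.2

/-- A matrix on `ℂ^A ⊗ ℂ^B` is separable if it is a finite sum of Kronecker products of
rank-one positive semidefinite matrices. -/
def IsSep {A B : Type*} (ρ : Matrix (A × B) (A × B) ℂ) : Prop :=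
  ∃ (T : ℕ) (x : Fin T → A → ℂ) (y : Fin T → B → ℂ),
    ρ = ∑ t : Fin T, Matrix.of (fun p q : A × B =>
      (x t p.1 * (starRingEnd ℂ) (x t q.1)) * (y t p.2 * (starRingEnd ℂ) (y t q.2)))

/-- Partial trace over the middle (B) system of the rank-one projection `|Ψ⟩⟨Ψ|`. -/
def TrB {A B : Type*} [Fintype B] {k : ℕ} (Ψ : A × B × Fin k → ℂ) :
    Matrix (A × Fin k) (A × Fin k) ℂ :=
  Matrix.of fun p q => ∑ b : B, Ψ (p.1, b, p.2) * (starRingEnd ℂ) (Ψ (q.1, b, q.2))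

/-- A subspace `V ⊆ ℂ^A ⊗ ℂ^B` is entanglement breaking if for every ancilla dimension
`k ≥ 1` and every `Ψ` whose slices all lie in `V`, the matrix `Tr_B |Ψ⟩⟨Ψ|` is separable. -/
def IsEBSpace {A B : Type*} [Fintype B] (V : Submodule ℂ (A × B → ℂ)) : Prop :=
  ∀ (k : ℕ), 1 ≤ k → ∀ Ψ : A × B × Fin k → ℂ,
    (∀ ℓ : Fin k, (fun ab : A × B => Ψ (ab.1, ab.2, ℓ)) ∈ V) → IsSep (TrB Ψ)

/-- Partial transpose on the B system. -/
def PT {A B : Type*} (ρ : Matrix (A × B) (A × B) ℂ) : Matrix (A × B) (A × B) ℂ :=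
  Matrix.of fun p q => ρ (p.1, q.2) (q.1, p.2)

/-- Partial trace over the B system of a matrix. -/
def trBmat {A B : Type*} [Fintype B] (ρ : Matrix (A × B) (A × B) ℂ) : Matrix A A ℂ :=
  Matrix.of fun a a' => ∑ b : B, ρ (a, b) (a', b)

/-- Partial trace over the A system of a matrix. -/
def trAmat {A B : Type*} [Fintype A] (ρ : Matrix (A × B) (A × B) ℂ) : Matrix B B ℂ :=
  Matrix.of fun b b' => ∑ a : A, ρ (a, b) (a, b')
lemma conj_ee (q j : ℕ) (b : Fin q) : (starRingEnd ℂ) (ee q j b) = ee q j b := by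
  unfold ee; split <;> simp

lemma sum_ee_mul (q j j' : ℕ) :
    ∑ b : Fin q, ee q j b * ee q j' b = if j = j' ∧ j < q then 1 else 0 := by
  unfold ee
  rw [Fin.sum_univ_eq_sum_range (fun i => (if i = j then (1:ℂ) else 0) * (if i = j' then 1 else 0)) q]
  simp only [ite_mul, one_mul, zero_mul]
  rw [Finset.sum_ite_eq' (Finset.range q) j (fun i => if i = j' then (1:ℂ) else 0)]
  simp only [Finset.mem_range]
  split_ifs with h1 h2 h3 h4 <;> try rfl
  · exact absurd ⟨h2, h1⟩ h3
  · tauto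
  · tauto

lemma gram {ι κ : Type*} [Fintype ι] [Fintype κ] (q : ℕ) (F : ι → ℂ) (P : ι → ℕ)
    (G : κ → ℂ) (P' : κ → ℕ) :
    ∑ b : Fin q, (∑ i, F i * ee q (P i) b) * (∑ j, G j * ee q (P' j) b)
      = ∑ i, ∑ j, if P i = P' j ∧ P i < q then F i * G j else 0 := by
  have h : ∀ b : Fin q, (∑ i, F i * ee q (P i) b) * (∑ j, G j * ee q (P' j) b)
      = ∑ i, ∑ j, (F i * G j) * (ee q (P i) b * ee q (P' j) b) := by
    intro b
    rw [Finset.sum_mul_sum]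
    exact Finset.sum_congr rfl fun i _ => Finset.sum_congr rfl fun j _ => by ring
  rw [Finset.sum_congr rfl fun b _ => h b, Finset.sum_comm]
  refine Finset.sum_congr rfl fun i _ => ?_
  rw [Finset.sum_comm]
  refine Finset.sum_congr rfl fun j _ => ?_
  rw [← Finset.mul_sum, sum_ee_mul]
  split_ifs <;> simp

lemma IsSep.add {A B : Type*} {ρ σ : Matrix (A × B) (A × B) ℂ} (hρ : IsSep ρ) (hσ : IsSep σ) :
    IsSep (ρ + σ) := by
  obtain ⟨T1, x1, y1, h1⟩ := hρ
  obtain ⟨T2, x2, y2, h2⟩ := hσ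
  refine ⟨T1 + T2, Fin.append x1 x2, Fin.append y1 y2, ?_⟩
  rw [Fin.sum_univ_add, h1, h2]
  congr 1 <;> exact Finset.sum_congr rfl fun t _ => by
    simp [Fin.append_left, Fin.append_right]

lemma isSep_single {A B : Type*} (x : A → ℂ) (y : B → ℂ) :
    IsSep (Matrix.of fun p q : A × B =>
      (x p.1 * (starRingEnd ℂ) (x q.1)) * (y p.2 * (starRingEnd ℂ) (y q.2))) :=
  ⟨1, fun _ => x, fun _ => y, by simp⟩

lemma isSep_cover {A B : Type*} (f g : A → ℂ) (u v : B → ℂ) :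
    IsSep (Matrix.of fun p q : A × B =>
      (f p.1 * (starRingEnd ℂ) (f q.1) + g p.1 * (starRingEnd ℂ) (g q.1)) *
        (u p.2 * (starRingEnd ℂ) (u q.2) + v p.2 * (starRingEnd ℂ) (v q.2))
      + f p.1 * (starRingEnd ℂ) (g q.1) * (u p.2 * (starRingEnd ℂ) (v q.2))
      + g p.1 * (starRingEnd ℂ) (f q.1) * (v p.2 * (starRingEnd ℂ) (u q.2))) := by
  refine ⟨4,
    ![fun a => (f a + g a) / 2, fun a => (f a - Complex.I * g a) / 2,
      fun a => (f a - g a) / 2, fun a => (f a + Complex.I * g a) / 2],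
    ![fun b => u b + v b, fun b => u b + Complex.I * v b,
      fun b => u b - v b, fun b => u b - Complex.I * v b], ?_⟩
  funext p q
  simp only [Fin.sum_univ_four, Matrix.sum_apply, Matrix.of_apply, Matrix.cons_val_zero,
    Matrix.cons_val_one, Matrix.head_cons, Matrix.cons_val_two, Matrix.tail_cons,
    Matrix.cons_val_three, map_add, map_sub, map_mul, map_div₀, Complex.conj_I, map_ofNat]
  ring_nf
  simp only [Complex.I_sq, Complex.I_pow_four]
  ring
/-- An explicit 3-dimensional EB subspace of `ℂ^m ⊗ ℂ^{3N}` for any `m ≥ 3`, `N ≥ 2`. -/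
theorem eb_three_dim_family {m N : ℕ} (hm : 3 ≤ m) (hN : 2 ≤ N)
    (x : Fin 3 → ℂ) (hx : ∀ j, Real.sqrt 2 ≤ ‖x j‖)
    (a b c : Fin (N - 2) → Fin m → ℂ) :
    IsEBSpace (Submodule.span ℂ
      ({fun p : Fin m × Fin (3 * N) =>
          ee m 1 p.1 * ee (3 * N) 2 p.2 + ee m 2 p.1 * ee (3 * N) 1 p.2
          + x 0 * ee m 0 p.1 * ee (3 * N) 3 p.2
          + ∑ i : Fin (N - 2), a i p.1 * ee (3 * N) (3 * ((i : ℕ) + 1) + 3) p.2,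
        fun p : Fin m × Fin (3 * N) =>
          ee m 2 p.1 * ee (3 * N) 0 p.2 + ee m 0 p.1 * ee (3 * N) 2 p.2
          + x 1 * ee m 1 p.1 * ee (3 * N) 4 p.2
          + ∑ i : Fin (N - 2), b i p.1 * ee (3 * N) (3 * ((i : ℕ) + 1) + 4) p.2,
        fun p : Fin m × Fin (3 * N) =>
          ee m 0 p.1 * ee (3 * N) 1 p.2 + ee m 1 p.1 * ee (3 * N) 0 p.2
          + x 2 * ee m 2 p.1 * ee (3 * N) 5 p.2
          + ∑ i : Fin (N - 2), c i p.1 * ee (3 * N) (3 * ((i : ℕ) + 1) + 5) p.2} :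
        Set (Fin m × Fin (3 * N) → ℂ))) ∧
    Module.finrank ℂ (Submodule.span ℂ
      ({fun p : Fin m × Fin (3 * N) =>
          ee m 1 p.1 * ee (3 * N) 2 p.2 + ee m 2 p.1 * ee (3 * N) 1 p.2
          + x 0 * ee m 0 p.1 * ee (3 * N) 3 p.2
          + ∑ i : Fin (N - 2), a i p.1 * ee (3 * N) (3 * ((i : ℕ) + 1) + 3) p.2,
        fun p : Fin m × Fin (3 * N) =>
          ee m 2 p.1 * ee (3 * N) 0 p.2 + ee m 0 p.1 * ee (3 * N) 2 p.2
          + x 1 * ee m 1 p.1 * ee (3 * N) 4 p.2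
          + ∑ i : Fin (N - 2), b i p.1 * ee (3 * N) (3 * ((i : ℕ) + 1) + 4) p.2,
        fun p : Fin m × Fin (3 * N) =>
          ee m 0 p.1 * ee (3 * N) 1 p.2 + ee m 1 p.1 * ee (3 * N) 0 p.2
          + x 2 * ee m 2 p.1 * ee (3 * N) 5 p.2
          + ∑ i : Fin (N - 2), c i p.1 * ee (3 * N) (3 * ((i : ℕ) + 1) + 5) p.2} :
        Set (Fin m × Fin (3 * N) → ℂ))) = 3 := by
  set v1 : Fin m × Fin (3 * N) → ℂ := fun p =>
      ee m 1 p.1 * ee (3 * N) 2 p.2 + ee m 2 p.1 * ee (3 * N) 1 p.2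
      + x 0 * ee m 0 p.1 * ee (3 * N) 3 p.2
      + ∑ i : Fin (N - 2), a i p.1 * ee (3 * N) (3 * ((i : ℕ) + 1) + 3) p.2 with hv1
  set v2 : Fin m × Fin (3 * N) → ℂ := fun p =>
      ee m 2 p.1 * ee (3 * N) 0 p.2 + ee m 0 p.1 * ee (3 * N) 2 p.2
      + x 1 * ee m 1 p.1 * ee (3 * N) 4 p.2
      + ∑ i : Fin (N - 2), b i p.1 * ee (3 * N) (3 * ((i : ℕ) + 1) + 4) p.2 with hv2
  set v3 : Fin m × Fin (3 * N) → ℂ := fun p =>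
      ee m 0 p.1 * ee (3 * N) 1 p.2 + ee m 1 p.1 * ee (3 * N) 0 p.2
      + x 2 * ee m 2 p.1 * ee (3 * N) 5 p.2
      + ∑ i : Fin (N - 2), c i p.1 * ee (3 * N) (3 * ((i : ℕ) + 1) + 5) p.2 with hv3
  have hsm : ∀ (cc d : ℕ), cc < 6 → 3 ≤ d → ∀ (j : Fin (N - 2)),
      ¬(cc = 3 * ((j : ℕ) + 1) + d) := by intro cc d h1 h2 j; omega
  have hsm' : ∀ (cc d : ℕ), cc < 6 → 3 ≤ d → ∀ (j : Fin (N - 2)),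
      ¬(3 * ((j : ℕ) + 1) + d = cc) := by intro cc d h1 h2 j; omega
  have hcross : ∀ (d d' : ℕ), d < d' → d' ≤ d + 2 → ∀ (i j : Fin (N - 2)),
      ¬(3 * ((i : ℕ) + 1) + d = 3 * ((j : ℕ) + 1) + d') := by intro d d' h1 h2 i j; omega
  have hcross' : ∀ (d d' : ℕ), d < d' → d' ≤ d + 2 → ∀ (i j : Fin (N - 2)),
      ¬(3 * ((i : ℕ) + 1) + d' = 3 * ((j : ℕ) + 1) + d) := by intro d d' h1 h2 i j; omega
  have heqd : ∀ (d : ℕ) (i j : Fin (N - 2)),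
      (3 * ((i : ℕ) + 1) + d = 3 * ((j : ℕ) + 1) + d) ↔ i = j := by
    intro d i j; rw [Fin.ext_iff]; omega
  have hltd : ∀ (d : ℕ), d ≤ 5 → ∀ (i : Fin (N - 2)), 3 * ((i : ℕ) + 1) + d < 3 * N := by
    intro d hd i; have := i.isLt; omega
  have h1 : ∀ (j : Fin (N - 2)), ¬(3 * ((j : ℕ) + 1) = 0) := by intro j; omega
  have h2 : ∀ (cc : ℕ), cc < 3 → ∀ (j : Fin (N - 2)), ¬(cc = 3 * ((j : ℕ) + 1)) := by
    intro cc h j; omega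
  have h2' : ∀ (cc : ℕ), cc < 3 → ∀ (j : Fin (N - 2)), ¬(3 * ((j : ℕ) + 1) = cc) := by
    intro cc h j; omega
  have h3 : ∀ (d : ℕ), 0 < d → d < 3 → ∀ (i j : Fin (N - 2)),
      ¬(3 * ((i : ℕ) + 1) = 3 * ((j : ℕ) + 1) + d) := by intro d h1 h2 i j; omega
  have h3' : ∀ (d : ℕ), 0 < d → d < 3 → ∀ (i j : Fin (N - 2)),
      ¬(3 * ((i : ℕ) + 1) + d = 3 * ((j : ℕ) + 1)) := by intro d h1 h2 i j; omega
  have c0 : (0:ℕ) < 3 * N := by omega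
  have c1 : (1:ℕ) < 3 * N := by omega
  have c2 : (2:ℕ) < 3 * N := by omega
  have c3 : (3:ℕ) < 3 * N := by omega
  have c4 : (4:ℕ) < 3 * N := by omega
  have c5 : (5:ℕ) < 3 * N := by omega
  constructor
  · -- EB property
    intro k hk Ψ hΨ
    obtain ⟨α, β, γ, hpt⟩ : ∃ α β γ : Fin k → ℂ, ∀ (ℓ : Fin k) (z : Fin m) (w : Fin (3 * N)),
        Ψ (z, w, ℓ) = α ℓ * v1 (z, w) + β ℓ * v2 (z, w) + γ ℓ * v3 (z, w) := by
      have hmem : ∀ ℓ : Fin k, ∃ p : ℂ × ℂ × ℂ,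
          (fun ab : Fin m × Fin (3 * N) => Ψ (ab.1, ab.2, ℓ))
            = p.1 • v1 + (p.2.1 • v2 + p.2.2 • v3) := by
        intro ℓ
        have h := hΨ ℓ
        rw [Submodule.mem_span_insert] at h
        obtain ⟨p1, z1, hz1, hxe⟩ := h
        rw [Submodule.mem_span_insert] at hz1
        obtain ⟨p2, z2, hz2, hz1e⟩ := hz1
        rw [Submodule.mem_span_singleton] at hz2
        obtain ⟨p3, hz2e⟩ := hz2
        exact ⟨(p1, p2, p3), by rw [hxe, hz1e, ← hz2e]⟩
      choose co hco using hmem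
      refine ⟨fun ℓ => (co ℓ).1, fun ℓ => (co ℓ).2.1, fun ℓ => (co ℓ).2.2, fun ℓ z w => ?_⟩
      have h := congrFun (hco ℓ) (z, w)
      simpa [add_assoc] using h
    -- representations
    have hrep1 : ∀ (z : Fin m) (w : Fin (3 * N)), v1 (z, w) =
        ∑ i : Fin 3 ⊕ Fin (N - 2),
          Sum.elim ![ee m 1 z, ee m 2 z, x 0 * ee m 0 z] (fun t => a t z) i *
            ee (3 * N) (Sum.elim ![2, 1, 3] (fun t : Fin (N - 2) => 3 * ((t : ℕ) + 1) + 3) i) w := by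
      intro z w
      simp only [hv1, Fintype.sum_sum_type, Fin.sum_univ_three, Sum.elim_inl, Sum.elim_inr,
        Matrix.cons_val_zero, Matrix.cons_val_one, Matrix.head_cons, Matrix.cons_val_two,
        Matrix.tail_cons]
    have hrep2 : ∀ (z : Fin m) (w : Fin (3 * N)), v2 (z, w) =
        ∑ i : Fin 3 ⊕ Fin (N - 2),
          Sum.elim ![ee m 2 z, ee m 0 z, x 1 * ee m 1 z] (fun t => b t z) i *
            ee (3 * N) (Sum.elim ![0, 2, 4] (fun t : Fin (N - 2) => 3 * ((t : ℕ) + 1) + 4) i) w := by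
      intro z w
      simp only [hv2, Fintype.sum_sum_type, Fin.sum_univ_three, Sum.elim_inl, Sum.elim_inr,
        Matrix.cons_val_zero, Matrix.cons_val_one, Matrix.head_cons, Matrix.cons_val_two,
        Matrix.tail_cons]
    have hrep3 : ∀ (z : Fin m) (w : Fin (3 * N)), v3 (z, w) =
        ∑ i : Fin 3 ⊕ Fin (N - 2),
          Sum.elim ![ee m 0 z, ee m 1 z, x 2 * ee m 2 z] (fun t => c t z) i *
            ee (3 * N) (Sum.elim ![1, 0, 5] (fun t : Fin (N - 2) => 3 * ((t : ℕ) + 1) + 5) i) w := by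
      intro z w
      simp only [hv3, Fintype.sum_sum_type, Fin.sum_univ_three, Sum.elim_inl, Sum.elim_inr,
        Matrix.cons_val_zero, Matrix.cons_val_one, Matrix.head_cons, Matrix.cons_val_two,
        Matrix.tail_cons]
    have hrep1c : ∀ (z : Fin m) (w : Fin (3 * N)), (starRingEnd ℂ) (v1 (z, w)) =
        ∑ i : Fin 3 ⊕ Fin (N - 2),
          Sum.elim ![ee m 1 z, ee m 2 z, (starRingEnd ℂ) (x 0) * ee m 0 z]
              (fun t => (starRingEnd ℂ) (a t z)) i *
            ee (3 * N) (Sum.elim ![2, 1, 3] (fun t : Fin (N - 2) => 3 * ((t : ℕ) + 1) + 3) i) w := by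
      intro z w
      rw [hrep1 z w, map_sum]
      refine Finset.sum_congr rfl fun i _ => ?_
      rw [map_mul, conj_ee]
      congr 1
      rcases i with i | i
      · fin_cases i <;> simp [conj_ee]
      · simp
    have hrep2c : ∀ (z : Fin m) (w : Fin (3 * N)), (starRingEnd ℂ) (v2 (z, w)) =
        ∑ i : Fin 3 ⊕ Fin (N - 2),
          Sum.elim ![ee m 2 z, ee m 0 z, (starRingEnd ℂ) (x 1) * ee m 1 z]
              (fun t => (starRingEnd ℂ) (b t z)) i *
            ee (3 * N) (Sum.elim ![0, 2, 4] (fun t : Fin (N - 2) => 3 * ((t : ℕ) + 1) + 4) i) w := by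
      intro z w
      rw [hrep2 z w, map_sum]
      refine Finset.sum_congr rfl fun i _ => ?_
      rw [map_mul, conj_ee]
      congr 1
      rcases i with i | i
      · fin_cases i <;> simp [conj_ee]
      · simp
    have hrep3c : ∀ (z : Fin m) (w : Fin (3 * N)), (starRingEnd ℂ) (v3 (z, w)) =
        ∑ i : Fin 3 ⊕ Fin (N - 2),
          Sum.elim ![ee m 0 z, ee m 1 z, (starRingEnd ℂ) (x 2) * ee m 2 z]
              (fun t => (starRingEnd ℂ) (c t z)) i *
            ee (3 * N) (Sum.elim ![1, 0, 5] (fun t : Fin (N - 2) => 3 * ((t : ℕ) + 1) + 5) i) w := by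
      intro z w
      rw [hrep3 z w, map_sum]
      refine Finset.sum_congr rfl fun i _ => ?_
      rw [map_mul, conj_ee]
      congr 1
      rcases i with i | i
      · fin_cases i <;> simp [conj_ee]
      · simp
    have hG11 : ∀ z z' : Fin m, ∑ bb : Fin (3 * N), v1 (z, bb) * (starRingEnd ℂ) (v1 (z', bb)) =
        ee m 1 z * ee m 1 z' + ee m 2 z * ee m 2 z'
          + (x 0 * (starRingEnd ℂ) (x 0)) * (ee m 0 z * ee m 0 z')
          + ∑ t : Fin (N - 2), a t z * (starRingEnd ℂ) (a t z') := by
      intro z z'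
      rw [Finset.sum_congr rfl fun bb _ => by rw [hrep1 z bb, hrep1c z' bb]]
      rw [gram]
      simp only [Fintype.sum_sum_type, Fin.sum_univ_three, Sum.elim_inl, Sum.elim_inr,
        Matrix.cons_val_zero, Matrix.cons_val_one, Matrix.head_cons, Matrix.cons_val_two,
        Matrix.tail_cons]
      simp [c0, c1, c2, c3, c4, c5, hsm, hsm', hcross, hcross', heqd, hltd,
        h1, h2, h2', h3, h3', Finset.sum_ite_eq]
      simp only [Fin.val_inj, Finset.sum_ite_eq, Finset.mem_univ, if_true]
      ring
    have hG12 : ∀ z z' : Fin m, ∑ bb : Fin (3 * N), v1 (z, bb) * (starRingEnd ℂ) (v2 (z', bb)) =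
        ee m 1 z * ee m 0 z' := by
      intro z z'
      rw [Finset.sum_congr rfl fun bb _ => by rw [hrep1 z bb, hrep2c z' bb]]
      rw [gram]
      simp only [Fintype.sum_sum_type, Fin.sum_univ_three, Sum.elim_inl, Sum.elim_inr,
        Matrix.cons_val_zero, Matrix.cons_val_one, Matrix.head_cons, Matrix.cons_val_two,
        Matrix.tail_cons]
      simp [c0, c1, c2, c3, c4, c5, hsm, hsm', hcross, hcross', heqd, hltd,
        h1, h2, h2', h3, h3', Finset.sum_ite_eq]
    have hG13 : ∀ z z' : Fin m, ∑ bb : Fin (3 * N), v1 (z, bb) * (starRingEnd ℂ) (v3 (z', bb)) =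
        ee m 2 z * ee m 0 z' := by
      intro z z'
      rw [Finset.sum_congr rfl fun bb _ => by rw [hrep1 z bb, hrep3c z' bb]]
      rw [gram]
      simp only [Fintype.sum_sum_type, Fin.sum_univ_three, Sum.elim_inl, Sum.elim_inr,
        Matrix.cons_val_zero, Matrix.cons_val_one, Matrix.head_cons, Matrix.cons_val_two,
        Matrix.tail_cons]
      simp [c0, c1, c2, c3, c4, c5, hsm, hsm', hcross, hcross', heqd, hltd,
        h1, h2, h2', h3, h3', Finset.sum_ite_eq]
    have hG21 : ∀ z z' : Fin m, ∑ bb : Fin (3 * N), v2 (z, bb) * (starRingEnd ℂ) (v1 (z', bb)) =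
        ee m 0 z * ee m 1 z' := by
      intro z z'
      rw [Finset.sum_congr rfl fun bb _ => by rw [hrep2 z bb, hrep1c z' bb]]
      rw [gram]
      simp only [Fintype.sum_sum_type, Fin.sum_univ_three, Sum.elim_inl, Sum.elim_inr,
        Matrix.cons_val_zero, Matrix.cons_val_one, Matrix.head_cons, Matrix.cons_val_two,
        Matrix.tail_cons]
      simp [c0, c1, c2, c3, c4, c5, hsm, hsm', hcross, hcross', heqd, hltd,
        h1, h2, h2', h3, h3', Finset.sum_ite_eq]
    have hG22 : ∀ z z' : Fin m, ∑ bb : Fin (3 * N), v2 (z, bb) * (starRingEnd ℂ) (v2 (z', bb)) =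
        ee m 2 z * ee m 2 z' + ee m 0 z * ee m 0 z'
          + (x 1 * (starRingEnd ℂ) (x 1)) * (ee m 1 z * ee m 1 z')
          + ∑ t : Fin (N - 2), b t z * (starRingEnd ℂ) (b t z') := by
      intro z z'
      rw [Finset.sum_congr rfl fun bb _ => by rw [hrep2 z bb, hrep2c z' bb]]
      rw [gram]
      simp only [Fintype.sum_sum_type, Fin.sum_univ_three, Sum.elim_inl, Sum.elim_inr,
        Matrix.cons_val_zero, Matrix.cons_val_one, Matrix.head_cons, Matrix.cons_val_two,
        Matrix.tail_cons]
      simp [c0, c1, c2, c3, c4, c5, hsm, hsm', hcross, hcross', heqd, hltd,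
        h1, h2, h2', h3, h3', Finset.sum_ite_eq]
      simp only [Fin.val_inj, Finset.sum_ite_eq, Finset.mem_univ, if_true]
      ring
    have hG23 : ∀ z z' : Fin m, ∑ bb : Fin (3 * N), v2 (z, bb) * (starRingEnd ℂ) (v3 (z', bb)) =
        ee m 2 z * ee m 1 z' := by
      intro z z'
      rw [Finset.sum_congr rfl fun bb _ => by rw [hrep2 z bb, hrep3c z' bb]]
      rw [gram]
      simp only [Fintype.sum_sum_type, Fin.sum_univ_three, Sum.elim_inl, Sum.elim_inr,
        Matrix.cons_val_zero, Matrix.cons_val_one, Matrix.head_cons, Matrix.cons_val_two,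
        Matrix.tail_cons]
      simp [c0, c1, c2, c3, c4, c5, hsm, hsm', hcross, hcross', heqd, hltd,
        h1, h2, h2', h3, h3', Finset.sum_ite_eq]
    have hG31 : ∀ z z' : Fin m, ∑ bb : Fin (3 * N), v3 (z, bb) * (starRingEnd ℂ) (v1 (z', bb)) =
        ee m 0 z * ee m 2 z' := by
      intro z z'
      rw [Finset.sum_congr rfl fun bb _ => by rw [hrep3 z bb, hrep1c z' bb]]
      rw [gram]
      simp only [Fintype.sum_sum_type, Fin.sum_univ_three, Sum.elim_inl, Sum.elim_inr,
        Matrix.cons_val_zero, Matrix.cons_val_one, Matrix.head_cons, Matrix.cons_val_two,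
        Matrix.tail_cons]
      simp [c0, c1, c2, c3, c4, c5, hsm, hsm', hcross, hcross', heqd, hltd,
        h1, h2, h2', h3, h3', Finset.sum_ite_eq]
    have hG32 : ∀ z z' : Fin m, ∑ bb : Fin (3 * N), v3 (z, bb) * (starRingEnd ℂ) (v2 (z', bb)) =
        ee m 1 z * ee m 2 z' := by
      intro z z'
      rw [Finset.sum_congr rfl fun bb _ => by rw [hrep3 z bb, hrep2c z' bb]]
      rw [gram]
      simp only [Fintype.sum_sum_type, Fin.sum_univ_three, Sum.elim_inl, Sum.elim_inr,
        Matrix.cons_val_zero, Matrix.cons_val_one, Matrix.head_cons, Matrix.cons_val_two,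
        Matrix.tail_cons]
      simp [c0, c1, c2, c3, c4, c5, hsm, hsm', hcross, hcross', heqd, hltd,
        h1, h2, h2', h3, h3', Finset.sum_ite_eq]
    have hG33 : ∀ z z' : Fin m, ∑ bb : Fin (3 * N), v3 (z, bb) * (starRingEnd ℂ) (v3 (z', bb)) =
        ee m 0 z * ee m 0 z' + ee m 1 z * ee m 1 z'
          + (x 2 * (starRingEnd ℂ) (x 2)) * (ee m 2 z * ee m 2 z')
          + ∑ t : Fin (N - 2), c t z * (starRingEnd ℂ) (c t z') := by
      intro z z'
      rw [Finset.sum_congr rfl fun bb _ => by rw [hrep3 z bb, hrep3c z' bb]]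
      rw [gram]
      simp only [Fintype.sum_sum_type, Fin.sum_univ_three, Sum.elim_inl, Sum.elim_inr,
        Matrix.cons_val_zero, Matrix.cons_val_one, Matrix.head_cons, Matrix.cons_val_two,
        Matrix.tail_cons]
      simp [c0, c1, c2, c3, c4, c5, hsm, hsm', hcross, hcross', heqd, hltd,
        h1, h2, h2', h3, h3', Finset.sum_ite_eq]
      simp only [Fin.val_inj, Finset.sum_ite_eq, Finset.mem_univ, if_true]
      ring
    set R : Fin 3 → ℂ := fun j => ((Real.sqrt (Complex.normSq (x j) - 2) : ℝ) : ℂ) with hR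
    have hr : ∀ j : Fin 3, R j * R j = x j * (starRingEnd ℂ) (x j) - 2 := by
      intro j
      have h2 : (2:ℝ) ≤ Complex.normSq (x j) := by
        have h := hx j
        have h' := pow_le_pow_left₀ (Real.sqrt_nonneg 2) h 2
        rw [Real.sq_sqrt (by norm_num : (0:ℝ) ≤ 2), Complex.sq_norm] at h'
        exact h'
      rw [hR, Complex.mul_conj, ← Complex.ofReal_mul,
        Real.mul_self_sqrt (by linarith)]
      push_cast
      ring
    have hRc : ∀ j : Fin 3, (starRingEnd ℂ) (R j) = R j := fun j => by
      rw [hR]; exact Complex.conj_ofReal _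
    have key : TrB Ψ =
        Matrix.of (fun p q : (Fin m) × (Fin k) =>
          (ee m 1 p.1 * (starRingEnd ℂ) (ee m 1 q.1) + ee m 0 p.1 * (starRingEnd ℂ) (ee m 0 q.1)) *
            (α p.2 * (starRingEnd ℂ) (α q.2) + β p.2 * (starRingEnd ℂ) (β q.2))
          + ee m 1 p.1 * (starRingEnd ℂ) (ee m 0 q.1) * (α p.2 * (starRingEnd ℂ) (β q.2))
          + ee m 0 p.1 * (starRingEnd ℂ) (ee m 1 q.1) * (β p.2 * (starRingEnd ℂ) (α q.2)))
        + Matrix.of (fun p q : (Fin m) × (Fin k) =>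
          (ee m 2 p.1 * (starRingEnd ℂ) (ee m 2 q.1) + ee m 0 p.1 * (starRingEnd ℂ) (ee m 0 q.1)) *
            (α p.2 * (starRingEnd ℂ) (α q.2) + γ p.2 * (starRingEnd ℂ) (γ q.2))
          + ee m 2 p.1 * (starRingEnd ℂ) (ee m 0 q.1) * (α p.2 * (starRingEnd ℂ) (γ q.2))
          + ee m 0 p.1 * (starRingEnd ℂ) (ee m 2 q.1) * (γ p.2 * (starRingEnd ℂ) (α q.2)))
        + Matrix.of (fun p q : (Fin m) × (Fin k) =>
          (ee m 2 p.1 * (starRingEnd ℂ) (ee m 2 q.1) + ee m 1 p.1 * (starRingEnd ℂ) (ee m 1 q.1)) *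
            (β p.2 * (starRingEnd ℂ) (β q.2) + γ p.2 * (starRingEnd ℂ) (γ q.2))
          + ee m 2 p.1 * (starRingEnd ℂ) (ee m 1 q.1) * (β p.2 * (starRingEnd ℂ) (γ q.2))
          + ee m 1 p.1 * (starRingEnd ℂ) (ee m 2 q.1) * (γ p.2 * (starRingEnd ℂ) (β q.2)))
        + Matrix.of (fun p q : (Fin m) × (Fin k) =>
          (R 0 * ee m 0 p.1 * (starRingEnd ℂ) (R 0 * ee m 0 q.1)) *
            (α p.2 * (starRingEnd ℂ) (α q.2)))
        + Matrix.of (fun p q : (Fin m) × (Fin k) =>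
          (R 1 * ee m 1 p.1 * (starRingEnd ℂ) (R 1 * ee m 1 q.1)) *
            (β p.2 * (starRingEnd ℂ) (β q.2)))
        + Matrix.of (fun p q : (Fin m) × (Fin k) =>
          (R 2 * ee m 2 p.1 * (starRingEnd ℂ) (R 2 * ee m 2 q.1)) *
            (γ p.2 * (starRingEnd ℂ) (γ q.2)))
        + (∑ t : Fin (N - 2), Matrix.of (fun p q : (Fin m) × (Fin k) =>
            a t p.1 * (starRingEnd ℂ) (a t q.1) * (α p.2 * (starRingEnd ℂ) (α q.2))))
        + (∑ t : Fin (N - 2), Matrix.of (fun p q : (Fin m) × (Fin k) =>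
            b t p.1 * (starRingEnd ℂ) (b t q.1) * (β p.2 * (starRingEnd ℂ) (β q.2))))
        + (∑ t : Fin (N - 2), Matrix.of (fun p q : (Fin m) × (Fin k) =>
            c t p.1 * (starRingEnd ℂ) (c t q.1) * (γ p.2 * (starRingEnd ℂ) (γ q.2)))) := by
      ext ⟨z, ℓ⟩ ⟨z', ℓ'⟩
      have expand : ∀ bb : Fin (3 * N),
          Ψ (z, bb, ℓ) * (starRingEnd ℂ) (Ψ (z', bb, ℓ')) =
            (α ℓ * (starRingEnd ℂ) (α ℓ')) * (v1 (z, bb) * (starRingEnd ℂ) (v1 (z', bb)))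
          + (α ℓ * (starRingEnd ℂ) (β ℓ')) * (v1 (z, bb) * (starRingEnd ℂ) (v2 (z', bb)))
          + (α ℓ * (starRingEnd ℂ) (γ ℓ')) * (v1 (z, bb) * (starRingEnd ℂ) (v3 (z', bb)))
          + (β ℓ * (starRingEnd ℂ) (α ℓ')) * (v2 (z, bb) * (starRingEnd ℂ) (v1 (z', bb)))
          + (β ℓ * (starRingEnd ℂ) (β ℓ')) * (v2 (z, bb) * (starRingEnd ℂ) (v2 (z', bb)))
          + (β ℓ * (starRingEnd ℂ) (γ ℓ')) * (v2 (z, bb) * (starRingEnd ℂ) (v3 (z', bb)))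
          + (γ ℓ * (starRingEnd ℂ) (α ℓ')) * (v3 (z, bb) * (starRingEnd ℂ) (v1 (z', bb)))
          + (γ ℓ * (starRingEnd ℂ) (β ℓ')) * (v3 (z, bb) * (starRingEnd ℂ) (v2 (z', bb)))
          + (γ ℓ * (starRingEnd ℂ) (γ ℓ')) * (v3 (z, bb) * (starRingEnd ℂ) (v3 (z', bb))) := by
        intro bb
        rw [hpt ℓ z bb, hpt ℓ' z' bb]
        simp only [map_add, map_mul]
        ring
      simp only [TrB, Matrix.of_apply, Matrix.add_apply, Matrix.sum_apply]
      rw [Finset.sum_congr rfl fun bb _ => expand bb]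
      simp only [Finset.sum_add_distrib, ← Finset.mul_sum]
      rw [hG11 z z', hG12 z z', hG13 z z', hG21 z z', hG22 z z', hG23 z z', hG31 z z',
        hG32 z z', hG33 z z']
      simp only [map_mul, conj_ee, hRc]
      simp only [← Finset.sum_mul]
      linear_combination (-(ee m 0 z * ee m 0 z' * (α ℓ * (starRingEnd ℂ) (α ℓ')))) * hr 0
        + (-(ee m 1 z * ee m 1 z' * (β ℓ * (starRingEnd ℂ) (β ℓ')))) * hr 1
        + (-(ee m 2 z * ee m 2 z' * (γ ℓ * (starRingEnd ℂ) (γ ℓ')))) * hr 2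
    rw [key]
    exact ((((((((isSep_cover (ee m 1) (ee m 0) α β).add
      (isSep_cover (ee m 2) (ee m 0) α γ)).add
      (isSep_cover (ee m 2) (ee m 1) β γ)).add
      (isSep_single (fun z => R 0 * ee m 0 z) α)).add
      (isSep_single (fun z => R 1 * ee m 1 z) β)).add
      (isSep_single (fun z => R 2 * ee m 2 z) γ)).add
      ⟨N - 2, a, fun _ => α, rfl⟩).add
      ⟨N - 2, b, fun _ => β, rfl⟩).add
      ⟨N - 2, c, fun _ => γ, rfl⟩
  · -- finrank
    have hli : LinearIndependent ℂ ![v1, v2, v3] := by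
      rw [Fintype.linearIndependent_iff]
      intro g hg
      have e1 := congrFun hg ((⟨1, by omega⟩ : Fin m), (⟨2, by omega⟩ : Fin (3 * N)))
      have e2 := congrFun hg ((⟨2, by omega⟩ : Fin m), (⟨0, by omega⟩ : Fin (3 * N)))
      have e3 := congrFun hg ((⟨0, by omega⟩ : Fin m), (⟨1, by omega⟩ : Fin (3 * N)))
      simp only [Fin.sum_univ_three, Matrix.cons_val_zero, Matrix.cons_val_one, Matrix.head_cons,
        Matrix.cons_val_two, Matrix.tail_cons, Pi.add_apply, Pi.smul_apply, smul_eq_mul,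
        Pi.zero_apply, hv1, hv2, hv3] at e1 e2 e3
      simp only [ee, Fin.mk.injEq] at e1 e2 e3
      norm_num [hsm] at e1 e2 e3
      intro i; fin_cases i <;> simp_all
    have hspan : ({v1, v2, v3} : Set (Fin m × Fin (3 * N) → ℂ)) = Set.range ![v1, v2, v3] := by
      ext u
      simp only [Set.mem_insert_iff, Set.mem_singleton_iff, Set.mem_range]
      constructor
      · rintro (rfl | rfl | rfl)
        exacts [⟨0, rfl⟩, ⟨1, rfl⟩, ⟨2, rfl⟩]
      · rintro ⟨i, rfl⟩
        fin_cases i <;> simp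
    rw [hspan, finrank_span_eq_card hli]
    simp
end
end

section
/- The 2-dimensional subspace of ℂ² ⊗ ℂ³ spanned by the vectors (1/√3)(e₀⊗e₂ − √2·e₁⊗e₀) and (1/√3)(√2·e₀⊗e₁ − e₁⊗e₂) is an entanglement-breaking space. -/
open scoped BigOperators ComplexOrder
open Kronecker

noncomputable section

lemma vec6_0 {α : Type*} (a b c d e f : α) : ![a,b,c,d,e,f] 0 = a := rfl
lemma vec6_1 {α : Type*} (a b c d e f : α) : ![a,b,c,d,e,f] 1 = b := rfl
lemma vec6_2 {α : Type*} (a b c d e f : α) : ![a,b,c,d,e,f] 2 = c := rfl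
lemma vec6_3 {α : Type*} (a b c d e f : α) : ![a,b,c,d,e,f] 3 = d := rfl
lemma vec6_4 {α : Type*} (a b c d e f : α) : ![a,b,c,d,e,f] 4 = e := rfl
lemma vec6_5 {α : Type*} (a b c d e f : α) : ![a,b,c,d,e,f] 5 = f := rfl

set_option maxHeartbeats 1600000 in
/-- The 2-dimensional subspace of `ℂ² ⊗ ℂ³` spanned by
`(1/√3)(e₀⊗e₂ − √2·e₁⊗e₀)` and `(1/√3)(√2·e₀⊗e₁ − e₁⊗e₂)` is an EB space. -/
theorem eb_prl_example :
    IsEBSpace (Submodule.span ℂ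
      ({fun p : Fin 2 × Fin 3 =>
          (1 / (Real.sqrt 3 : ℂ)) *
            (ee 2 0 p.1 * ee 3 2 p.2 - (Real.sqrt 2 : ℂ) * ee 2 1 p.1 * ee 3 0 p.2),
        fun p : Fin 2 × Fin 3 =>
          (1 / (Real.sqrt 3 : ℂ)) *
            ((Real.sqrt 2 : ℂ) * ee 2 0 p.1 * ee 3 1 p.2 - ee 2 1 p.1 * ee 3 2 p.2)} :
        Set (Fin 2 × Fin 3 → ℂ))) := by
  intro k _ Ψ hΨ
  choose c d hcd using fun ℓ => Submodule.mem_span_pair.mp (hΨ ℓ)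
  have hΨ' : ∀ (a : Fin 2) (b : Fin 3) (ℓ : Fin k),
      Ψ (a, b, ℓ) =
        c ℓ * ((1 / (Real.sqrt 3 : ℂ)) *
            (ee 2 0 a * ee 3 2 b - (Real.sqrt 2 : ℂ) * ee 2 1 a * ee 3 0 b)) +
        d ℓ * ((1 / (Real.sqrt 3 : ℂ)) *
            ((Real.sqrt 2 : ℂ) * ee 2 0 a * ee 3 1 b - ee 2 1 a * ee 3 2 b)) := by
    intro a b ℓ
    have := congrFun (hcd ℓ) (a, b)
    simpa [smul_eq_mul] using this.symm
  have h3 : (Real.sqrt 3 : ℂ) * (Real.sqrt 3 : ℂ) = 3 := by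
    rw [← Complex.ofReal_mul, Real.mul_self_sqrt (by norm_num)]; norm_num
  have h2 : (Real.sqrt 2 : ℂ) * (Real.sqrt 2 : ℂ) = 2 := by
    rw [← Complex.ofReal_mul, Real.mul_self_sqrt (by norm_num)]; norm_num
  have hs3 : (Real.sqrt 3 : ℂ) ≠ 0 := by
    simp [Complex.ofReal_ne_zero, Real.sqrt_eq_zero']
  refine ⟨6, ![![1/(2*(Real.sqrt 3:ℂ)), -(1/(2*(Real.sqrt 3:ℂ)))],
      ![1/(2*(Real.sqrt 3:ℂ)), -(Complex.I/(2*(Real.sqrt 3:ℂ)))],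
      ![1/(2*(Real.sqrt 3:ℂ)), 1/(2*(Real.sqrt 3:ℂ))],
      ![1/(2*(Real.sqrt 3:ℂ)), Complex.I/(2*(Real.sqrt 3:ℂ))],
      ![1/(Real.sqrt 3:ℂ), 0], ![0, 1/(Real.sqrt 3:ℂ)]],
    ![fun ℓ => c ℓ + d ℓ, fun ℓ => c ℓ - Complex.I * d ℓ,
      fun ℓ => c ℓ - d ℓ, fun ℓ => c ℓ + Complex.I * d ℓ,
      fun ℓ => d ℓ, fun ℓ => c ℓ], ?_⟩
  ext ⟨a, ℓ⟩ ⟨a', ℓ'⟩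
  simp only [TrB, Matrix.of_apply, Matrix.sum_apply, hΨ', Fin.sum_univ_three,
    Fin.sum_univ_six]
  have p32 : (Real.sqrt 3 : ℂ)^2 = 3 := by rw [sq]; exact h3
  have p34 : (Real.sqrt 3 : ℂ)^4 = 9 := by rw [show (4:ℕ)=2*2 from rfl, pow_mul, p32]; norm_num
  have p36 : (Real.sqrt 3 : ℂ)^6 = 27 := by rw [show (6:ℕ)=2*3 from rfl, pow_mul, p32]; norm_num
  have p33 : (Real.sqrt 3 : ℂ)^3 = 3 * Real.sqrt 3 := by rw [pow_succ, p32]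
  have p35 : (Real.sqrt 3 : ℂ)^5 = 9 * Real.sqrt 3 := by rw [pow_succ, p34]
  have p22 : (Real.sqrt 2 : ℂ)^2 = 2 := by rw [sq]; exact h2
  have p24 : (Real.sqrt 2 : ℂ)^4 = 4 := by rw [show (4:ℕ)=2*2 from rfl, pow_mul, p22]; norm_num
  have p23 : (Real.sqrt 2 : ℂ)^3 = 2 * Real.sqrt 2 := by rw [pow_succ, p22]
  have p310 : (Real.sqrt 3 : ℂ)^10 = 243 := by
    rw [show (10:ℕ)=2*5 from rfl, pow_mul, p32]; norm_num
  have p38 : (Real.sqrt 3 : ℂ)^8 = 81 := by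
    rw [show (8:ℕ)=2*4 from rfl, pow_mul, p32]; norm_num
  have p3i6 : ((Real.sqrt 3 : ℂ)⁻¹)^6 = 27⁻¹ := by rw [inv_pow, p36]
  have p3i4 : ((Real.sqrt 3 : ℂ)⁻¹)^4 = 9⁻¹ := by rw [inv_pow, p34]
  have p3i2 : ((Real.sqrt 3 : ℂ)⁻¹)^2 = 3⁻¹ := by rw [inv_pow, p32]
  have pI3 : Complex.I^3 = -Complex.I := by
    rw [pow_succ, Complex.I_sq]; ring
  have pI4 : Complex.I^4 = 1 := by
    rw [show (4:ℕ)=2*2 from rfl, pow_mul, Complex.I_sq]; norm_num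
  fin_cases a <;> fin_cases a' <;>
    simp only [ee, vec6_0, vec6_1, vec6_2, vec6_3, vec6_4, vec6_5,
      Matrix.cons_val_zero, Matrix.cons_val_one, Matrix.head_cons, map_add,
      map_mul, map_sub, map_div₀, map_one, map_neg, Complex.conj_ofReal, Complex.conj_I,
      map_ofNat, Fin.isValue] <;>
    norm_num <;>
    try (field_simp; ring_nf; simp only [p32, p33, p34, p35, p36, p38, p22, p23, p24, p3i6, p3i4, p3i2, p310, pI3, pI4, Complex.I_sq, map_ofNat]; ring_nf)
end
end
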